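/- (Perturbation of a tensor multiple, left factor.) Let C be a chain complex, F = (f,g,h) : A → B an SDR with side conditions, and δ a perturbation of C with no assumption needed on invertibility: consider the SDR 1_C ⊗ F : C⊗A → C⊗B with homotopy 1⊗h, perturbed by δ⊗1. Then 1 + (δ⊗1)(1⊗h) = 1 + δ⊗h, and the perturbed SDR components equal f̂ = 1⊗f, ĝ = 1⊗g, ĥ = 1⊗h with perturbed differential δ⊗1 on C⊗B; i.e., (1_C⊗F)_{δ⊗1} = 1_{C_δ}⊗F. -/

import Mathlib

open TensorProduct

/-- View an element of the endomorphism ring as a linear map. -/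
def linOfEnd {M : Type*} [AddCommGroup M] (f : Module.End ℤ M) : M →ₗ[ℤ] M := f

/-- **Perturbation of a tensor multiple, left factor.** Let `C` be a chain complex
(with sign involution `σ`), `F = (f,g,h) : A → B` an SDR with side conditions, and
`δ` a perturbation of `C`.  Consider the SDR `1_C ⊗ F : C⊗A → C⊗B` with homotopy
`1⊗h` (Koszul: `σ⊗h`) perturbed by `δ⊗1`.  Then
`1 + (δ⊗1)(1⊗h) = 1 + δ⊗h` and the perturbed SDR components are `f̂ = 1⊗f`,
`ĝ = 1⊗g`, `ĥ = 1⊗h`, with perturbed differential `δ' = δ⊗1` on `C⊗B`;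
i.e. `(1_C⊗F)_{δ⊗1} = 1_{C_δ}⊗F`. -/
theorem perturbation_tensor_left
    {C A B : Type*} [AddCommGroup C] [AddCommGroup A] [AddCommGroup B]
    (dC : C →ₗ[ℤ] C) (hdC : dC ∘ₗ dC = 0)
    (σ : C →ₗ[ℤ] C) (hσσ : σ ∘ₗ σ = LinearMap.id) (hσd : σ ∘ₗ dC = -(dC ∘ₗ σ))
    (δ : C →ₗ[ℤ] C) (hδ2 : (dC + δ) ∘ₗ (dC + δ) = 0) (hσδ : σ ∘ₗ δ = -(δ ∘ₗ σ))
    (dA : A →ₗ[ℤ] A) (dB : B →ₗ[ℤ] B) (hdA : dA ∘ₗ dA = 0) (hdB : dB ∘ₗ dB = 0)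
    (f : A →ₗ[ℤ] B) (g : B →ₗ[ℤ] A) (h : A →ₗ[ℤ] A)
    (hfchain : f ∘ₗ dA = dB ∘ₗ f) (hgchain : dA ∘ₗ g = g ∘ₗ dB)
    (hfg : f ∘ₗ g = LinearMap.id)
    (hhom : dA ∘ₗ h + h ∘ₗ dA = LinearMap.id - g ∘ₗ f)
    (hfh : f ∘ₗ h = 0) (hhg : h ∘ₗ g = 0) (hhh : h ∘ₗ h = 0)
    (U : (Module.End ℤ (C ⊗[ℤ] A))ˣ)
    (hU : linOfEnd (U : Module.End ℤ (C ⊗[ℤ] A)) =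
      LinearMap.id + (TensorProduct.map δ LinearMap.id) ∘ₗ (TensorProduct.map σ h))
    (V : (Module.End ℤ (C ⊗[ℤ] A))ˣ)
    (hV : linOfEnd (V : Module.End ℤ (C ⊗[ℤ] A)) =
      LinearMap.id + (TensorProduct.map σ h) ∘ₗ (TensorProduct.map δ LinearMap.id)) :
    -- (δ⊗1)(1⊗h) = δ⊗h (with the Koszul sign absorbed into σ):
    (TensorProduct.map δ LinearMap.id) ∘ₗ (TensorProduct.map σ h) =
      TensorProduct.map (δ ∘ₗ σ) h ∧
    -- f̂ = (1⊗f)(1+(δ⊗1)(1⊗h))⁻¹ = 1⊗f: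
    (TensorProduct.map (LinearMap.id : C →ₗ[ℤ] C) f) ∘ₗ
        linOfEnd ((U⁻¹ : (Module.End ℤ (C ⊗[ℤ] A))ˣ) : Module.End ℤ (C ⊗[ℤ] A)) =
      TensorProduct.map LinearMap.id f ∧
    -- ĝ = (1+(1⊗h)(δ⊗1))⁻¹(1⊗g) = 1⊗g:
    linOfEnd ((V⁻¹ : (Module.End ℤ (C ⊗[ℤ] A))ˣ) : Module.End ℤ (C ⊗[ℤ] A)) ∘ₗ
        (TensorProduct.map (LinearMap.id : C →ₗ[ℤ] C) g) =
      TensorProduct.map LinearMap.id g ∧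
    -- ĥ = (1⊗h)(1+(δ⊗1)(1⊗h))⁻¹ = 1⊗h:
    (TensorProduct.map σ h) ∘ₗ
        linOfEnd ((U⁻¹ : (Module.End ℤ (C ⊗[ℤ] A))ˣ) : Module.End ℤ (C ⊗[ℤ] A)) =
      TensorProduct.map σ h ∧
    -- δ' = f̂ (δ⊗1) (1⊗g) = δ⊗1 on C⊗B:
    ((TensorProduct.map (LinearMap.id : C →ₗ[ℤ] C) f) ∘ₗ
        linOfEnd ((U⁻¹ : (Module.End ℤ (C ⊗[ℤ] A))ˣ) : Module.End ℤ (C ⊗[ℤ] A))) ∘ₗ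
        ((TensorProduct.map δ LinearMap.id) ∘ₗ (TensorProduct.map (LinearMap.id : C →ₗ[ℤ] C) g)) =
      TensorProduct.map δ LinearMap.id := by

  -- abbreviations
  set X : Module.End ℤ (C ⊗[ℤ] A) :=
    (TensorProduct.map δ LinearMap.id) ∘ₗ (TensorProduct.map σ h) with hX
  set Y : Module.End ℤ (C ⊗[ℤ] A) :=
    (TensorProduct.map σ h) ∘ₗ (TensorProduct.map δ LinearMap.id) with hY
  have hXeq : X = TensorProduct.map (δ ∘ₗ σ) h := by
    rw [hX]
    have := TensorProduct.map_comp δ (LinearMap.id : A →ₗ[ℤ] A) σ h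
    rw [LinearMap.id_comp] at this
    exact this.symm
  have hYeq : Y = TensorProduct.map (σ ∘ₗ δ) h := by
    rw [hY]
    have := TensorProduct.map_comp σ h δ (LinearMap.id : A →ₗ[ℤ] A)
    rw [LinearMap.comp_id] at this
    exact this.symm
  have hXX : X * X = 0 := by
    show X ∘ₗ X = 0
    rw [hXeq]
    have := TensorProduct.map_comp (δ ∘ₗ σ) h (δ ∘ₗ σ) h
    rw [hhh, TensorProduct.map_zero_right] at this
    exact this.symm
  have hYY : Y * Y = 0 := by
    show Y ∘ₗ Y = 0
    rw [hYeq]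
    have := TensorProduct.map_comp (σ ∘ₗ δ) h (σ ∘ₗ δ) h
    rw [hhh, TensorProduct.map_zero_right] at this
    exact this.symm
  have hU' : (U : Module.End ℤ (C ⊗[ℤ] A)) = 1 + X := hU
  have hV' : (V : Module.End ℤ (C ⊗[ℤ] A)) = 1 + Y := hV
  have hUinv : ((U⁻¹ : (Module.End ℤ (C ⊗[ℤ] A))ˣ) : Module.End ℤ (C ⊗[ℤ] A)) = 1 - X := by
    apply Units.inv_eq_of_mul_eq_one_right
    rw [hU']
    rw [add_mul, one_mul, mul_sub, mul_one, hXX]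
    abel
  have hVinv : ((V⁻¹ : (Module.End ℤ (C ⊗[ℤ] A))ˣ) : Module.End ℤ (C ⊗[ℤ] A)) = 1 - Y := by
    apply Units.inv_eq_of_mul_eq_one_right
    rw [hV']
    rw [add_mul, one_mul, mul_sub, mul_one, hYY]
    abel
  have hfX : (TensorProduct.map (LinearMap.id : C →ₗ[ℤ] C) f) ∘ₗ X = 0 := by
    rw [hXeq]
    have := TensorProduct.map_comp (LinearMap.id : C →ₗ[ℤ] C) f (δ ∘ₗ σ) h
    rw [hfh, TensorProduct.map_zero_right] at this
    exact this.symm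
  have hfhat : (TensorProduct.map (LinearMap.id : C →ₗ[ℤ] C) f) ∘ₗ
      linOfEnd ((U⁻¹ : (Module.End ℤ (C ⊗[ℤ] A))ˣ) : Module.End ℤ (C ⊗[ℤ] A)) =
      TensorProduct.map LinearMap.id f := by
    show (TensorProduct.map (LinearMap.id : C →ₗ[ℤ] C) f) ∘ₗ
      ((U⁻¹ : (Module.End ℤ (C ⊗[ℤ] A))ˣ) : Module.End ℤ (C ⊗[ℤ] A)) = _
    rw [hUinv]
    have : (TensorProduct.map (LinearMap.id : C →ₗ[ℤ] C) f) ∘ₗ (1 - X) = (TensorProduct.map (LinearMap.id : C →ₗ[ℤ] C) f) ∘ₗ (1 : Module.End ℤ (C ⊗[ℤ] A)) - (TensorProduct.map (LinearMap.id : C →ₗ[ℤ] C) f) ∘ₗ X :=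
      LinearMap.comp_sub _ _ _
    rw [hfX, sub_zero] at this
    exact this
  refine ⟨hXeq, hfhat, ?_, ?_, ?_⟩
  · show (((V⁻¹ : (Module.End ℤ (C ⊗[ℤ] A))ˣ) : Module.End ℤ (C ⊗[ℤ] A)) : _ →ₗ[ℤ] _) ∘ₗ
      (TensorProduct.map (LinearMap.id : C →ₗ[ℤ] C) g) = _
    have hYg : Y ∘ₗ (TensorProduct.map (LinearMap.id : C →ₗ[ℤ] C) g) = 0 := by
      rw [hYeq]
      have := TensorProduct.map_comp (σ ∘ₗ δ) h (LinearMap.id : C →ₗ[ℤ] C) g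
      rw [hhg, TensorProduct.map_zero_right] at this
      exact this.symm
    rw [hVinv]
    have : (1 - Y) ∘ₗ (TensorProduct.map (LinearMap.id : C →ₗ[ℤ] C) g) = (1 : Module.End ℤ (C ⊗[ℤ] A)) ∘ₗ (TensorProduct.map (LinearMap.id : C →ₗ[ℤ] C) g) - Y ∘ₗ (TensorProduct.map (LinearMap.id : C →ₗ[ℤ] C) g) :=
      LinearMap.sub_comp _ _ _
    rw [hYg, sub_zero] at this
    exact this
  · show (TensorProduct.map σ h) ∘ₗ
      (((U⁻¹ : (Module.End ℤ (C ⊗[ℤ] A))ˣ) : Module.End ℤ (C ⊗[ℤ] A)) : _ →ₗ[ℤ] _) = _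
    have hhX : (TensorProduct.map σ h) ∘ₗ X = 0 := by
      rw [hXeq]
      have := TensorProduct.map_comp σ h (δ ∘ₗ σ) h
      rw [hhh, TensorProduct.map_zero_right] at this
      exact this.symm
    rw [hUinv]
    have : (TensorProduct.map σ h) ∘ₗ (1 - X) = (TensorProduct.map σ h) ∘ₗ (1 : Module.End ℤ (C ⊗[ℤ] A)) - (TensorProduct.map σ h) ∘ₗ X :=
      LinearMap.comp_sub _ _ _
    rw [hhX, sub_zero] at this
    exact this
  · rw [hfhat]
    have := TensorProduct.map_comp (LinearMap.id : C →ₗ[ℤ] C) f δ g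
    rw [hfg, LinearMap.id_comp] at this
    have h2 := TensorProduct.map_comp δ (LinearMap.id : A →ₗ[ℤ] A) (LinearMap.id : C →ₗ[ℤ] C) g
    rw [LinearMap.comp_id, LinearMap.id_comp] at h2
    rw [h2] at this
    exact this.symm
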